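/- Let G be a δ-hyperbolic group with a fixed generating set, and let g ∈ G lie on an infinite geodesic ray from the identity. Then there exists a constant c depending only on δ such that for any R ≥ 0 and any n ≥ 0, the shadow S_1(g, R + c) ⊂ G contains a ball of radius n in the Cayley graph; consequently #(S_1(g, R+c) ∩ S_{n'}) grows at rate λ^{n'}, i.e., the shadow has maximal growth. -/

import Mathlib

open Filter

noncomputable def wordLength {G : Type*} [Group G] (S : Set G) (g : G) : ℕ :=
  sInf {n | ∃ l : List G, l.length = n ∧ (∀ x ∈ l, x ∈ S) ∧ l.prod = g}

noncomputable def gp3 {G : Type*} [Group G] (S : Set G) (x y z : G) : ℝ :=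
  ((wordLength S (x⁻¹ * y) : ℝ) + (wordLength S (x⁻¹ * z) : ℝ)
    - (wordLength S (y⁻¹ * z) : ℝ)) / 2

noncomputable def groupShadow {G : Type*} [Group G] (S : Set G) (g : G) (R : ℝ) :
    Set G :=
  {z | (wordLength S g : ℝ) - R ≤ gp3 S 1 g z}

section WL
variable {G : Type*} [Group G] (S : Finset G)
variable (hgen : ∀ g : G, ∃ l : List G, (∀ x ∈ l, x ∈ (S : Set G)) ∧ l.prod = g)

lemma wl_le {g : G} {l : List G} (hl : ∀ x ∈ l, x ∈ (S : Set G)) (hp : l.prod = g) :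
    wordLength (S : Set G) g ≤ l.length :=
  Nat.sInf_le ⟨l, rfl, hl, hp⟩

lemma wl_one : wordLength (S : Set G) 1 = 0 :=
  Nat.le_zero.mp (wl_le S (l := []) (by simp) (by simp))

include hgen
lemma wl_spec (g : G) : ∃ l : List G,
    l.length = wordLength (S : Set G) g ∧ (∀ x ∈ l, x ∈ (S : Set G)) ∧ l.prod = g := by
  have hne : {n | ∃ l : List G, l.length = n ∧ (∀ x ∈ l, x ∈ (S:Set G)) ∧ l.prod = g}.Nonempty := by
    obtain ⟨l, hl, hp⟩ := hgen g
    exact ⟨l.length, l, rfl, hl, hp⟩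
  exact Nat.sInf_mem hne

lemma wl_mul_le (a b : G) : wordLength (S:Set G) (a * b) ≤
    wordLength (S:Set G) a + wordLength (S:Set G) b := by
  obtain ⟨la, hla, hlaS, hlap⟩ := wl_spec S hgen a
  obtain ⟨lb, hlb, hlbS, hlbp⟩ := wl_spec S hgen b
  have := wl_le S (g := a * b) (l := la ++ lb)
    (by intro x hx; rcases List.mem_append.mp hx with h | h; exacts [hlaS x h, hlbS x h])
    (by rw [List.prod_append, hlap, hlbp])
  simpa [hla, hlb] using this

lemma wl_prod_le (C : ℕ) (l : List G) (h : ∀ x ∈ l, wordLength (S:Set G) x ≤ C) :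
    wordLength (S:Set G) l.prod ≤ C * l.length := by
  induction l with
  | nil => simp [wl_one]
  | cons x t ih =>
      calc wordLength (S:Set G) (x * t.prod)
          ≤ wordLength (S:Set G) x + wordLength (S:Set G) t.prod := wl_mul_le S hgen x t.prod
        _ ≤ C + C * t.length := by
            gcongr
            · exact h x (by simp)
            · exact ih (fun y hy => h y (by simp [hy]))
        _ = C * (x :: t).length := by simp [Nat.mul_succ]; ring

lemma wl_inv_le (g : G) :
    wordLength (S : Set G) g⁻¹ ≤
      (S.sup fun s => wordLength (S : Set G) s⁻¹) * wordLength (S : Set G) g := by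
  obtain ⟨l, hl, hlS, hlp⟩ := wl_spec S hgen g
  have h1 : g⁻¹ = ((l.map fun x => x⁻¹).reverse).prod := by rw [← hlp, List.prod_inv_reverse]
  rw [h1]
  have h2 := wl_prod_le S hgen (S.sup fun s => wordLength (S:Set G) s⁻¹)
    ((l.map fun x => x⁻¹).reverse) ?_
  · simpa [hl] using h2
  · intro x hx
    simp only [List.mem_reverse, List.mem_map] at hx
    obtain ⟨s, hs, rfl⟩ := hx
    exact Finset.le_sup (f := fun s => wordLength (S:Set G) s⁻¹) (hlS s hs)
end WL

set_option maxHeartbeats 1000000 in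
theorem shadow_maximal_growth (δ : ℝ) (hδ : 0 ≤ δ) :
    ∃ c : ℝ, 0 ≤ c ∧
      ∀ (G : Type) [Group G] (S : Finset G),
        (∀ g : G, ∃ l : List G, (∀ x ∈ l, x ∈ (S : Set G)) ∧ l.prod = g) →
        (∀ x a b c' : G,
          min (gp3 (S : Set G) x a b) (gp3 (S : Set G) x b c') - δ ≤
            gp3 (S : Set G) x a c') →
        ∀ (lam c₀ : ℝ), 1 < lam → 1 ≤ c₀ →
        (∀ n : ℕ, c₀⁻¹ * lam ^ n ≤ (Nat.card {h : G | wordLength (S : Set G) h = n} : ℝ) ∧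
          (Nat.card {h : G | wordLength (S : Set G) h = n} : ℝ) ≤ c₀ * lam ^ n) →
        ∀ γ : ℕ → G, γ 0 = 1 →
        (∀ m n : ℕ, (wordLength (S : Set G) ((γ m)⁻¹ * γ n) : ℤ) = |(m : ℤ) - n|) →
        ∀ (D : ℕ) (R : ℝ), 0 ≤ R →
          (∀ n : ℕ, ∃ h : G,
            {z : G | (wordLength (S : Set G) (h⁻¹ * z) : ℝ) ≤ n} ⊆
              groupShadow (S : Set G) (γ D) (R + c)) ∧
          atTop.limsup (fun n : ℕ =>
            (Nat.card {z : G | z ∈ groupShadow (S : Set G) (γ D) (R + c) ∧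
                wordLength (S : Set G) z = n} : ℝ) ^ ((n : ℝ)⁻¹)) = lam := by
  classical
  refine ⟨δ, hδ, ?_⟩
  intro G _ S hgen hhyp lam c₀ hlam hc₀ hcoor γ hγ0 hγ D R hR
  have hlam0 : (0:ℝ) < lam := lt_trans one_pos hlam
  have hc₀0 : (0:ℝ) < c₀ := lt_of_lt_of_le one_pos hc₀
  -- length of ray points
  have hγlen : ∀ n : ℕ, wordLength (S : Set G) (γ n) = n := by
    intro n
    have h := hγ 0 n
    rw [hγ0, inv_one, one_mul] at h
    have : ((wordLength (S : Set G) (γ n) : ℤ)) = (n : ℤ) := by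
      rw [h]; simp
    exact_mod_cast this
  have hγdiff : ∀ a b : ℕ, a ≤ b →
      ((wordLength (S : Set G) ((γ a)⁻¹ * γ b) : ℝ)) = (b : ℝ) - a := by
    intro a b hab
    have h := hγ a b
    have : |(a : ℤ) - b| = (b : ℤ) - a := by
      rw [abs_sub_comm]
      refine abs_of_nonneg ?_
      omega
    rw [this] at h
    have h2 : ((wordLength (S : Set G) ((γ a)⁻¹ * γ b) : ℝ)) = ((b : ℤ) - a : ℤ) := by
      exact_mod_cast congrArg (fun t : ℤ => (t : ℝ)) h
    rw [h2]; push_cast; ring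
  have gp_one : ∀ a b : G, gp3 (S : Set G) 1 a b =
      ((wordLength (S : Set G) a : ℝ) + wordLength (S : Set G) b
        - wordLength (S : Set G) (a⁻¹ * b)) / 2 := by
    intro a b; simp [gp3]
  -- shadow criterion
  have hshadow : ∀ (M : ℕ) (z : G), D ≤ M → ((D : ℝ) ≤ gp3 (S : Set G) 1 (γ M) z) →
      z ∈ groupShadow (S : Set G) (γ D) (R + δ) := by
    intro M z hDM hz
    have h1 : gp3 (S : Set G) 1 (γ D) (γ M) = D := by
      rw [gp_one, hγlen, hγlen, hγdiff D M hDM]; push_cast; ring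
    have h2 := hhyp 1 (γ D) (γ M) z
    rw [h1, min_eq_left hz] at h2
    show (wordLength (S : Set G) (γ D) : ℝ) - (R + δ) ≤ _
    rw [hγlen]
    linarith
  constructor
  · -- Part 1: balls in the shadow
    intro n
    set Cn := S.sup fun s => wordLength (S : Set G) s⁻¹ with hCn
    refine ⟨γ (D + n * (Cn + 1)), ?_⟩
    intro z hz
    set K := n * (Cn + 1) with hK
    set w := (γ (D + K))⁻¹ * z with hw
    have hwn : wordLength (S : Set G) w ≤ n := by exact_mod_cast hz
    have hwinv : wordLength (S : Set G) w⁻¹ ≤ Cn * n :=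
      le_trans (wl_inv_le S hgen w) (Nat.mul_le_mul_left _ hwn)
    have hz1 : γ (D + K) = z * w⁻¹ := by rw [hw]; group
    have hzlen : ((D : ℝ) + K) ≤ wordLength (S : Set G) z + wordLength (S : Set G) w⁻¹ := by
      have h3 := wl_mul_le S hgen z w⁻¹
      rw [← hz1, hγlen] at h3
      exact_mod_cast h3
    apply hshadow (D + K) z (Nat.le_add_right _ _)
    rw [gp_one, hγlen]
    have hwK : wordLength (S : Set G) ((γ (D + K))⁻¹ * z) = wordLength (S : Set G) w := rfl
    rw [hwK]
    have c1 : (wordLength (S : Set G) w : ℝ) ≤ n := by exact_mod_cast hwn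
    have c2 : (wordLength (S : Set G) w⁻¹ : ℝ) ≤ (Cn : ℝ) * n := by exact_mod_cast hwinv
    have c3 : ((K : ℝ)) = n * (Cn + 1) := by rw [hK]; push_cast; ring
    have c4 : (0:ℝ) ≤ wordLength (S : Set G) z := Nat.cast_nonneg _
    push_cast
    nlinarith [Nat.cast_nonneg (α := ℝ) n, Nat.cast_nonneg (α := ℝ) Cn]
  ·
    -- Part 2: maximal growth
    obtain ⟨t₀, ht₀⟩ : ∃ t₀ : ℕ, 2 * c₀ ^ 2 / (lam - 1) < lam ^ t₀ :=
      pow_unbounded_of_one_lt _ hlam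
    have hlam1 : (0:ℝ) < lam - 1 := by linarith
    set M : ℕ := 2 * D + t₀ with hM
    set shd := groupShadow (S : Set G) (γ D) (R + δ) with hshd
    -- spheres are finite
    have hfin : ∀ n : ℕ, ({h : G | wordLength (S : Set G) h = n}).Finite := by
      intro n
      by_contra hinf
      have h0 := (hcoor n).1
      rw [Nat.card_coe_set_eq, Set.Infinite.ncard hinf] at h0
      have : (0:ℝ) < c₀⁻¹ * lam ^ n := by positivity
      simp only [Nat.cast_zero] at h0
      linarith
    have hfin2 : ∀ n : ℕ, ({z : G | z ∈ shd ∧ wordLength (S : Set G) z = n}).Finite :=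
      fun n => (hfin n).subset (fun z hz => hz.2)
    -- counting the small balls
    have hball : ∀ k : ℕ, (({z : G | wordLength (S : Set G) z < k}).ncard : ℝ) ≤
        ∑ i ∈ Finset.range k, c₀ * lam ^ i := by
      intro k
      induction k with
      | zero => simp
      | succ k ih =>
          have hsplit : {z : G | wordLength (S : Set G) z < k + 1} =
              {z : G | wordLength (S : Set G) z < k} ∪
              {z : G | wordLength (S : Set G) z = k} := by
            ext z; simp only [Set.mem_setOf_eq, Set.mem_union]; omega
          rw [hsplit, Finset.sum_range_succ]
          have h1 := Set.ncard_union_le {z : G | wordLength (S : Set G) z < k}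
            {z : G | wordLength (S : Set G) z = k}
          have h1' : ((({z : G | wordLength (S : Set G) z < k} ∪
              {z : G | wordLength (S : Set G) z = k}).ncard : ℝ)) ≤
              (({z : G | wordLength (S : Set G) z < k}).ncard : ℝ) +
              (({z : G | wordLength (S : Set G) z = k}).ncard : ℝ) := by exact_mod_cast h1
          have h2 := (hcoor k).2
          rw [Nat.card_coe_set_eq] at h2
          linarith
    have hballfin : ∀ k : ℕ, ({z : G | wordLength (S : Set G) z < k}).Finite := by
      intro k
      have hsub : {z : G | wordLength (S : Set G) z < k} ⊆
          ⋃ i ∈ Finset.range k, {h : G | wordLength (S : Set G) h = i} := by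
        intro z hz
        simp only [Set.mem_setOf_eq] at hz
        simp only [Set.mem_iUnion, Finset.mem_range, Set.mem_setOf_eq]
        exact ⟨_, hz, rfl⟩
      exact Set.Finite.subset (Set.Finite.biUnion (Finset.range k).finite_toSet
        (fun i _ => hfin i)) hsub
    -- key counting construction
    have hkey : ∀ m : ℕ, t₀ + 1 ≤ m → ∃ n' : ℕ, m ≤ n' + t₀ ∧ n' ≤ m + M ∧
        lam ^ m / (2 * c₀ * ((M : ℝ) + t₀ + 1)) ≤
          (Nat.card {z : G | z ∈ shd ∧ wordLength (S : Set G) z = n'} : ℝ) := by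
      intro m hm
      set Good := {v : G | wordLength (S : Set G) v = m ∧
        m ≤ wordLength (S : Set G) (γ M * v) + t₀} with hGoodDef
      set Bad := {v : G | wordLength (S : Set G) v = m ∧
        wordLength (S : Set G) (γ M * v) + t₀ < m} with hBadDef
      have hGfin : Good.Finite := (hfin m).subset (fun v hv => hv.1)
      have hBfin : Bad.Finite := (hfin m).subset (fun v hv => hv.1)
      have hsplit : {h : G | wordLength (S : Set G) h = m} = Good ∪ Bad := by
        ext v; simp only [hGoodDef, hBadDef, Set.mem_setOf_eq, Set.mem_union]; omega
      have hdisj : Disjoint Good Bad := by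
        rw [Set.disjoint_left]
        rintro v ⟨_, h1⟩ ⟨_, h2⟩
        omega
      -- bound on Bad
      have hBadcard : (Bad.ncard : ℝ) ≤ c₀ * lam ^ (m - t₀) / (lam - 1) := by
        have hmap : (Bad.ncard : ℝ) ≤
            (({z : G | wordLength (S : Set G) z < m - t₀}).ncard : ℝ) := by
          have hinj := Set.ncard_le_ncard_of_injOn (fun v => γ M * v)
            (fun v hv => by
              obtain ⟨h1, h2⟩ := (hv : wordLength (S : Set G) v = m ∧
                wordLength (S : Set G) (γ M * v) + t₀ < m)
              show wordLength (S : Set G) (γ M * v) < m - t₀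
              omega)
            (fun a _ b _ hab => by exact mul_left_cancel hab)
            (hballfin (m - t₀))
          exact_mod_cast hinj
        refine le_trans (le_trans hmap (hball (m - t₀))) ?_
        rw [← Finset.mul_sum, geom_sum_eq (ne_of_gt hlam)]
        have hstep : (lam ^ (m - t₀) - 1) / (lam - 1) ≤ lam ^ (m - t₀) / (lam - 1) := by
          rw [div_le_div_iff_of_pos_right hlam1]
          linarith
        calc c₀ * ((lam ^ (m - t₀) - 1) / (lam - 1))
            ≤ c₀ * (lam ^ (m - t₀) / (lam - 1)) := by nlinarith [hstep]
          _ = c₀ * lam ^ (m - t₀) / (lam - 1) := by ring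
      -- lower bound on Good
      have hGoodcard : lam ^ m / (2 * c₀) ≤ (Good.ncard : ℝ) := by
        have h0 := (hcoor m).1
        rw [Nat.card_coe_set_eq, hsplit,
          Set.ncard_union_eq hdisj hGfin hBfin] at h0
        have hmt : m - t₀ + t₀ = m := by omega
        have hpow : lam ^ (m - t₀) * lam ^ t₀ = lam ^ m := by rw [← pow_add, hmt]
        have hb2 : c₀ * lam ^ (m - t₀) / (lam - 1) ≤ lam ^ m / (2 * c₀) := by
          rw [div_le_div_iff₀ hlam1 (by positivity)]
          have h2 : 2 * c₀ ^ 2 < lam ^ t₀ * (lam - 1) := by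
            rw [div_lt_iff₀ hlam1] at ht₀; linarith
          calc c₀ * lam ^ (m - t₀) * (2 * c₀) = lam ^ (m - t₀) * (2 * c₀ ^ 2) := by ring
            _ ≤ lam ^ (m - t₀) * (lam ^ t₀ * (lam - 1)) := by
                have := pow_pos hlam0 (m - t₀); nlinarith
            _ = lam ^ m * (lam - 1) := by rw [← hpow]; ring
        push_cast at h0
        have hc₀inv : c₀⁻¹ * lam ^ m = 2 * (lam ^ m / (2 * c₀)) := by field_simp
        linarith
      -- each good element maps into the shadow, with controlled length
      have hGoodmem : ∀ v ∈ Good, γ M * v ∈ shd ∧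
          m - t₀ ≤ wordLength (S : Set G) (γ M * v) ∧
          wordLength (S : Set G) (γ M * v) ≤ m + M := by
        intro v hv
        simp only [hGoodDef, Set.mem_setOf_eq] at hv
        obtain ⟨hv1, hv2⟩ := hv
        have hinv : (γ M)⁻¹ * (γ M * v) = v := by group
        refine ⟨?_, by omega, ?_⟩
        · apply hshadow M _ (by omega)
          rw [gp_one, hγlen, hinv, hv1]
          have hc : (m : ℝ) ≤ (wordLength (S : Set G) (γ M * v) : ℝ) + t₀ := by
            exact_mod_cast hv2
          have hMD : (M : ℝ) = 2 * D + t₀ := by rw [hM]; push_cast; ring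
          linarith
        · have h3 := wl_mul_le S hgen (γ M) v
          rw [hγlen, hv1] at h3
          omega
      -- pigeonhole over the window
      set GF := hGfin.toFinset with hGF
      have hGFcard : (GF.card : ℕ) = Good.ncard := (Set.ncard_eq_toFinset_card Good hGfin).symm
      have hmaps : ∀ v ∈ GF, wordLength (S : Set G) (γ M * v) ∈
          Finset.Icc (m - t₀) (m + M) := by
        intro v hv
        rw [Set.Finite.mem_toFinset] at hv
        obtain ⟨_, h2, h3⟩ := hGoodmem v hv
        rw [Finset.mem_Icc]
        exact ⟨h2, h3⟩
      have hsum := Finset.card_eq_sum_card_fiberwise hmaps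
      have hWcard : (Finset.Icc (m - t₀) (m + M)).card = M + t₀ + 1 := by
        rw [Nat.card_Icc]; omega
      have hpig : ∃ n' ∈ Finset.Icc (m - t₀) (m + M), (GF.card : ℝ) ≤
          ((M : ℝ) + t₀ + 1) *
            ((GF.filter fun v => wordLength (S : Set G) (γ M * v) = n').card) := by
        by_contra hcon
        push_neg at hcon
        have hne : (Finset.Icc (m - t₀) (m + M)).Nonempty := by
          rw [Finset.nonempty_Icc]; omega
        have hlt : (GF.card : ℝ) < GF.card := by
          calc (GF.card : ℝ)
              = ∑ n' ∈ Finset.Icc (m - t₀) (m + M),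
                  ((GF.filter fun v => wordLength (S : Set G) (γ M * v) = n').card : ℝ) := by
                exact_mod_cast hsum
            _ < ∑ _n' ∈ Finset.Icc (m - t₀) (m + M),
                  (GF.card : ℝ) / ((M : ℝ) + t₀ + 1) := by
                apply Finset.sum_lt_sum_of_nonempty hne
                intro i hi
                have := hcon i hi
                rw [lt_div_iff₀ (by positivity)]
                linarith
            _ = (GF.card : ℝ) := by
                rw [Finset.sum_const, hWcard, nsmul_eq_mul]
                push_cast
                field_simp
        exact lt_irrefl _ hlt
      obtain ⟨n', hn'mem, hn'big⟩ := hpig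
      rw [Finset.mem_Icc] at hn'mem
      refine ⟨n', by omega, hn'mem.2, ?_⟩
      -- the fiber injects into the shadow-sphere
      have hfib : ((GF.filter fun v => wordLength (S : Set G) (γ M * v) = n').card : ℝ) ≤
          (Nat.card {z : G | z ∈ shd ∧ wordLength (S : Set G) z = n'} : ℝ) := by
        rw [Nat.card_coe_set_eq]
        have hinj := Set.ncard_le_ncard_of_injOn (fun v => γ M * v)
          (s := ((GF.filter fun v => wordLength (S : Set G) (γ M * v) = n') : Set G))
          (t := {z : G | z ∈ shd ∧ wordLength (S : Set G) z = n'})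
          (fun v hv => by
            simp only [Finset.coe_filter, Set.mem_setOf_eq] at hv
            obtain ⟨hv1, hv2⟩ := hv
            rw [Set.Finite.mem_toFinset] at hv1
            exact ⟨(hGoodmem v hv1).1, hv2⟩)
          (fun a _ b _ hab => by exact mul_left_cancel hab)
          (hfin2 n')
        rw [Set.ncard_coe_finset] at hinj
        exact_mod_cast hinj
      have hGNR : (lam ^ m) / (2 * c₀) ≤ (GF.card : ℝ) := by
        have hq : (GF.card : ℝ) = (Good.ncard : ℝ) := by exact_mod_cast hGFcard
        rw [hq]; exact hGoodcard
      have h2c : (0:ℝ) < 2 * c₀ := by positivity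
      rw [div_le_iff₀ h2c] at hGNR
      rw [div_le_iff₀ (by positivity)]
      set FC : ℝ := ((GF.filter fun v => wordLength (S : Set G) (γ M * v) = n').card : ℝ)
        with hFC
      calc lam ^ m ≤ (GF.card : ℝ) * (2 * c₀) := hGNR
        _ ≤ (((M : ℝ) + t₀ + 1) * FC) * (2 * c₀) :=
            mul_le_mul_of_nonneg_right hn'big h2c.le
        _ = FC * (2 * c₀ * ((M : ℝ) + t₀ + 1)) := by ring
        _ ≤ (Nat.card {z : G | z ∈ shd ∧ wordLength (S : Set G) z = n'} : ℝ) *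
              (2 * c₀ * ((M : ℝ) + t₀ + 1)) :=
            mul_le_mul_of_nonneg_right hfib (by positivity)
    -- the limsup computation
    have hfup : ∀ n : ℕ,
        (Nat.card {z : G | z ∈ shd ∧ wordLength (S : Set G) z = n} : ℝ) ≤ c₀ * lam ^ n := by
      intro n
      have hsub : {z : G | z ∈ shd ∧ wordLength (S : Set G) z = n} ⊆
          {h : G | wordLength (S : Set G) h = n} := fun z hz => hz.2
      have h1 := Set.ncard_le_ncard hsub (hfin n)
      have h2 := (hcoor n).2
      rw [Nat.card_coe_set_eq] at h2 ⊢
      calc ((({z : G | z ∈ shd ∧ wordLength (S : Set G) z = n}).ncard : ℕ) : ℝ)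
          ≤ (({h : G | wordLength (S : Set G) h = n}).ncard : ℝ) := by exact_mod_cast h1
        _ ≤ c₀ * lam ^ n := h2
    set u : ℕ → ℝ := fun n =>
      (Nat.card {z : G | z ∈ shd ∧ wordLength (S : Set G) z = n} : ℝ) ^ ((n : ℝ)⁻¹) with hudef
    have hu_nonneg : ∀ n, 0 ≤ u n := fun n => Real.rpow_nonneg (Nat.cast_nonneg _) _
    have hrpow_eq : ∀ (A : ℝ), 0 ≤ A → ∀ n : ℕ, 1 ≤ n →
        (A * lam ^ n) ^ ((n : ℝ)⁻¹) = A ^ ((n : ℝ)⁻¹) * lam := by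
      intro A hA n hn
      have hn0 : ((n : ℝ)) ≠ 0 := Nat.cast_ne_zero.mpr (by omega)
      rw [Real.mul_rpow hA (by positivity)]
      congr 1
      rw [← Real.rpow_natCast lam n, ← Real.rpow_mul hlam0.le]
      rw [mul_inv_cancel₀ hn0, Real.rpow_one]
    have hub : ∀ n : ℕ, 1 ≤ n → u n ≤ c₀ ^ ((n : ℝ)⁻¹) * lam := by
      intro n hn
      calc u n ≤ (c₀ * lam ^ n) ^ ((n : ℝ)⁻¹) :=
            Real.rpow_le_rpow (Nat.cast_nonneg _) (hfup n) (by positivity)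
        _ = _ := hrpow_eq c₀ hc₀0.le n hn
    have htendc : ∀ A : ℝ, 0 < A →
        Filter.Tendsto (fun n : ℕ => A ^ ((n : ℝ)⁻¹) * lam) atTop (nhds lam) := by
      intro A hA
      have h1 : Filter.Tendsto (fun n : ℕ => ((n : ℝ))⁻¹) atTop (nhds 0) :=
        tendsto_inv_atTop_nhds_zero_nat
      have h2 : Filter.Tendsto (fun n : ℕ => A ^ ((n : ℝ)⁻¹)) atTop (nhds 1) := by
        have h3 := (Real.continuousAt_const_rpow (a := A) (b := 0) (ne_of_gt hA)).tendsto.comp h1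
        simpa [Real.rpow_zero, Function.comp_def] using h3
      simpa using h2.mul_const lam
    have hbd : IsBoundedUnder (· ≤ ·) atTop u := by
      refine isBoundedUnder_of ⟨c₀ * lam, ?_⟩
      intro n
      rcases Nat.eq_zero_or_pos n with h | h
      · subst h
        have : u 0 = 1 := by
          rw [hudef]; simp [Real.rpow_zero]
        rw [this]; nlinarith
      · have h1 := hub n h
        have hle : c₀ ^ ((n : ℝ)⁻¹) ≤ c₀ := by
          calc c₀ ^ ((n : ℝ)⁻¹) ≤ c₀ ^ (1 : ℝ) := by
                apply Real.rpow_le_rpow_of_exponent_le hc₀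
                rw [inv_le_one_iff₀]
                right
                exact_mod_cast h
            _ = c₀ := Real.rpow_one c₀
        nlinarith [Real.rpow_nonneg hc₀0.le ((n : ℝ)⁻¹)]
    have hbdg : IsBoundedUnder (· ≥ ·) atTop u := isBoundedUnder_of ⟨0, fun n => hu_nonneg n⟩
    have hupper : limsup u atTop ≤ lam := by
      have hstep : ∀ ε : ℝ, 0 < ε → limsup u atTop ≤ lam + ε := by
        intro ε hε
        apply limsup_le_of_le hbdg.isCoboundedUnder_le
        have hev := (htendc c₀ hc₀0).eventually (eventually_le_nhds (by linarith : lam < lam + ε))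
        filter_upwards [hev, eventually_ge_atTop 1] with n h1 h2
        exact le_trans (hub n h2) h1
      by_contra hcon
      push_neg at hcon
      have := hstep ((limsup u atTop - lam) / 2) (by linarith)
      linarith
    have hlower : lam ≤ limsup u atTop := by
      set Cst : ℝ := (lam ^ M * (2 * c₀ * ((M : ℝ) + t₀ + 1)))⁻¹ with hCst
      have hCst0 : 0 < Cst := by rw [hCst]; positivity
      have hfreq : ∀ N : ℕ, ∃ n' : ℕ, N + 1 ≤ n' ∧ Cst * lam ^ n' ≤
          (Nat.card {z : G | z ∈ shd ∧ wordLength (S : Set G) z = n'} : ℝ) := by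
        intro N
        obtain ⟨n', h1, h2, h3⟩ := hkey (N + t₀ + 1) (by omega)
        refine ⟨n', by omega, ?_⟩
        have hple : lam ^ n' ≤ lam ^ (N + t₀ + 1) * lam ^ M := by
          rw [← pow_add]; exact pow_le_pow_right₀ hlam.le (by omega)
        have hkeyeq : Cst * (lam ^ (N + t₀ + 1) * lam ^ M) =
            lam ^ (N + t₀ + 1) / (2 * c₀ * ((M : ℝ) + t₀ + 1)) := by
          rw [hCst]
          have hp : (0:ℝ) < lam ^ M := pow_pos hlam0 M
          field_simp
        calc Cst * lam ^ n' ≤ Cst * (lam ^ (N + t₀ + 1) * lam ^ M) := by nlinarith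
          _ = lam ^ (N + t₀ + 1) / (2 * c₀ * ((M : ℝ) + t₀ + 1)) := hkeyeq
          _ ≤ _ := h3
      apply le_of_forall_sub_le
      intro ε hε
      apply le_limsup_of_frequently_le _ hbd
      rw [frequently_atTop]
      intro N
      have hev := (htendc Cst hCst0).eventually
        (eventually_ge_nhds (by linarith : lam - ε < lam))
      obtain ⟨N₂, hN₂⟩ := eventually_atTop.mp hev
      obtain ⟨n', hn'1, hn'2⟩ := hfreq (max N N₂)
      have hnN : N ≤ n' := le_trans (le_max_left N N₂) (by omega)
      have hnN₂ : N₂ ≤ n' := le_trans (le_max_right N N₂) (by omega)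
      have hn1 : 1 ≤ n' := by omega
      refine ⟨n', hnN, ?_⟩
      have hle : (Cst * lam ^ n') ^ ((n' : ℝ)⁻¹) ≤ u n' :=
        Real.rpow_le_rpow (by positivity) hn'2 (by positivity)
      rw [hrpow_eq Cst hCst0.le n' hn1] at hle
      exact le_trans (hN₂ n' hnN₂) hle
    exact le_antisymm hupper hlower
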